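/- Let x_1 ≤ ... ≤ x_n be sorted reals with n = km. Among all partitions of {1,...,n} into k blocks Q_1,...,Q_k of size m, the sum of squared block means ∑_{ℓ=1}^k ((1/m)∑_{i∈Q_ℓ} x_i)² is maximized by the ordered partition Q_ℓ = {(ℓ-1)m+1,...,ℓm}. -/

import Mathlib

open Finset

lemma abel_sq (k : ℕ) (T S : ℕ → ℝ)
    (hT : ∀ i, i + 2 ≤ k → T i ≤ T (i+1))
    (hS : ∀ i, i + 2 ≤ k → S i ≤ S (i+1))
    (hpre : ∀ j, j ≤ k → ∑ i ∈ Finset.range j, T i ≤ ∑ i ∈ Finset.range j, S i)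
    (htot : ∑ i ∈ Finset.range k, T i = ∑ i ∈ Finset.range k, S i) :
    ∑ i ∈ Finset.range k, S i ^ 2 ≤ ∑ i ∈ Finset.range k, T i ^ 2 := by
  have key : 0 ≤ ∑ i ∈ Finset.range k, (T i + S i) * (T i - S i) := by
    have h := Finset.sum_range_by_parts (fun i => T i + S i) (fun i => T i - S i) k
    simp only [smul_eq_mul] at h
    rw [h]
    have h1 : ∑ i ∈ Finset.range k, (T i - S i) = 0 := by
      rw [Finset.sum_sub_distrib, htot]; ring
    rw [h1, mul_zero, zero_sub, neg_nonneg]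
    apply Finset.sum_nonpos
    intro i hi
    have hik : i < k - 1 := Finset.mem_range.mp hi
    have h2 : i + 2 ≤ k := by omega
    apply mul_nonpos_of_nonneg_of_nonpos
    · have := hT i h2; have := hS i h2; linarith
    · have h3 : i + 1 ≤ k := by omega
      have := hpre (i+1) h3
      rw [Finset.sum_sub_distrib]; linarith
  have h4 : ∑ i ∈ Finset.range k, (T i + S i) * (T i - S i)
      = ∑ i ∈ Finset.range k, T i ^ 2 - ∑ i ∈ Finset.range k, S i ^ 2 := by
    rw [← Finset.sum_sub_distrib]
    apply Finset.sum_congr rfl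
    intro i _; ring
  linarith [h4 ▸ key]

lemma fin_strictMono_ge {r : ℕ} (f : Fin r → ℕ) (hf : StrictMono f)
    (h1 : ∀ i, 1 ≤ f i) : ∀ i : Fin r, (i : ℕ) + 1 ≤ f i := by
  have H : ∀ j (h : j < r), j + 1 ≤ f ⟨j, h⟩ := by
    intro j
    induction j with
    | zero => intro h; exact h1 _
    | succ j ih =>
      intro h
      have hj : j < r := Nat.lt_of_succ_lt h
      have h2 := hf (show (⟨j, hj⟩ : Fin r) < ⟨j+1, h⟩ from by simp [Fin.lt_def])
      have := ih hj
      omega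
  intro i; exact H i.val i.isLt

lemma sum_icc_le_sum_subset (x : ℕ → ℝ) (hx : Monotone x) (A : Finset ℕ) (r : ℕ)
    (hcard : A.card = r) (h1 : ∀ a ∈ A, 1 ≤ a) :
    ∑ i ∈ Finset.Icc 1 r, x i ≤ ∑ a ∈ A, x a := by
  have e := A.orderIsoOfFin hcard
  have hsum : ∑ a ∈ A, x a = ∑ i : Fin r, x (e i) := by
    rw [← Finset.sum_attach A (fun a => x a), ← Finset.univ_eq_attach]
    exact (Equiv.sum_comp e.toEquiv (fun a => x (a : ℕ))).symm
  have hlhs : ∑ i ∈ Finset.Icc 1 r, x i = ∑ i : Fin r, x (1 + (i : ℕ)) := by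
    rw [← Finset.Ico_add_one_right_eq_Icc, Finset.sum_Ico_eq_sum_range,
      show r + 1 - 1 = r from rfl]
    exact (Fin.sum_univ_eq_sum_range (fun i => x (1 + i)) r).symm
  rw [hsum, hlhs]
  apply Finset.sum_le_sum
  intro i _
  apply hx
  have hsm : StrictMono (fun i : Fin r => ((e i : ℕ))) :=
    fun a b hab => Subtype.coe_lt_coe.mpr (e.strictMono hab)
  have := fin_strictMono_ge _ hsm (fun i => h1 _ (e i).2) i
  omega

def orderedPartition (m k : ℕ) : Fin k → Finset ℕ :=
  fun ℓ => Finset.Icc ((ℓ : ℕ) * m + 1) (((ℓ : ℕ) + 1) * m)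

/-- For sorted reals `x_1 ≤ … ≤ x_n`, `n = km`, among all partitions of
`{1,…,n}` into `k` blocks of size `m`, the sum of squared block means is
maximized by the ordered (consecutive-blocks) partition. -/
theorem stmt12 (m k n : ℕ) (hm : 1 ≤ m) (hk : 1 ≤ k) (hn : n = k * m)
    (x : ℕ → ℝ) (hx : Monotone x)
    (Q : Fin k → Finset ℕ)
    (hdisj : ∀ i j, i ≠ j → Disjoint (Q i) (Q j))
    (hcard : ∀ i, (Q i).card = m)
    (hcover : Finset.univ.biUnion Q = Finset.Icc 1 n) :
    ∑ ℓ : Fin k, ((1 / (m : ℝ)) * ∑ i ∈ Q ℓ, x i) ^ 2 ≤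
      ∑ ℓ : Fin k, ((1 / (m : ℝ)) * ∑ i ∈ orderedPartition m k ℓ, x i) ^ 2 := by
  classical
  set S : Fin k → ℝ := fun ℓ => ∑ i ∈ Q ℓ, x i with hSdef
  set σ : Equiv.Perm (Fin k) := Tuple.sort S with hσ
  set S' : ℕ → ℝ := fun i => if h : i < k then S (σ ⟨i, h⟩) else 0 with hS'def
  set T : ℕ → ℝ := fun ℓ => ∑ i ∈ Finset.Ioc (ℓ*m) ((ℓ+1)*m), x i with hTdef
  have hTpre : ∀ j, ∑ i ∈ Finset.range j, T i = ∑ i ∈ Finset.Ioc 0 (j*m), x i := by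
    intro j
    induction j with
    | zero => simp
    | succ j ih =>
      rw [Finset.sum_range_succ, ih]
      exact Finset.sum_Ioc_consecutive x (Nat.zero_le _) (mul_le_mul_left (Nat.le_succ j) m)
  have hTmono : ∀ i : ℕ, T i ≤ T (i+1) := by
    intro i
    have hmap : Finset.Ioc ((i+1)*m) ((i+2)*m)
        = (Finset.Ioc (i*m) ((i+1)*m)).map (addRightEmbedding m) := by
      rw [Finset.map_add_right_Ioc]
      congr 1 <;> ring
    have h2 : T (i+1) = ∑ j ∈ Finset.Ioc (i*m) ((i+1)*m), x (j + m) := by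
      show ∑ j ∈ Finset.Ioc ((i+1)*m) ((i+1+1)*m), x j = _
      rw [show i+1+1 = i+2 from rfl, hmap, Finset.sum_map]
      rfl
    rw [h2]
    exact Finset.sum_le_sum fun j _ => hx (Nat.le_add_right j m)
  have hQsub : ∀ b : Fin k, ∀ a ∈ Q b, 1 ≤ a := by
    intro b a ha
    have : a ∈ Finset.Icc 1 n := by
      rw [← hcover]; exact Finset.mem_biUnion.mpr ⟨b, Finset.mem_univ b, ha⟩
    exact (Finset.mem_Icc.mp this).1
  have hS'mono : ∀ i, i + 2 ≤ k → S' i ≤ S' (i+1) := by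
    intro i h2
    have h1 : i < k := by omega
    have h1' : i + 1 < k := by omega
    simp only [hS'def, dif_pos h1, dif_pos h1']
    exact Tuple.monotone_sort S
      (show (⟨i, h1⟩ : Fin k) ≤ ⟨i+1, h1'⟩ from by simp [Fin.le_def])
  have hpre : ∀ j, j ≤ k → ∑ i ∈ Finset.range j, T i ≤ ∑ i ∈ Finset.range j, S' i := by
    intro j hj
    have hinj : Function.Injective (fun i : Fin j => σ (Fin.castLE hj i)) :=
      fun a b hab => Fin.castLE_injective hj (σ.injective hab)
    set I : Finset (Fin k) := Finset.image (fun i : Fin j => σ (Fin.castLE hj i)) Finset.univ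
      with hI
    have hrhs : ∑ i ∈ Finset.range j, S' i = ∑ b ∈ I, S b := by
      rw [hI, Finset.sum_image (fun a _ b _ h => hinj h)]
      rw [← Fin.sum_univ_eq_sum_range S' j]
      apply Finset.sum_congr rfl
      intro i _
      have hik : (i : ℕ) < k := lt_of_lt_of_le i.isLt hj
      simp only [hS'def, dif_pos hik]
      rfl
    set A : Finset ℕ := I.biUnion Q with hA
    have hIcard : I.card = j := by
      rw [hI, Finset.card_image_of_injective _ hinj, Finset.card_univ, Fintype.card_fin]
    have hAcard : A.card = j * m := by
      rw [hA, Finset.card_biUnion (fun a _ b _ hab => hdisj a b hab)]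
      rw [Finset.sum_congr rfl (fun b _ => hcard b), Finset.sum_const, hIcard, smul_eq_mul]
    have hsumA : ∑ a ∈ A, x a = ∑ b ∈ I, S b :=
      Finset.sum_biUnion (fun a _ b _ hab => hdisj a b hab)
    have hA1 : ∀ a ∈ A, 1 ≤ a := by
      intro a ha
      obtain ⟨b, _, hb⟩ := Finset.mem_biUnion.mp ha
      exact hQsub b a hb
    rw [hrhs, ← hsumA, hTpre j,
      show Finset.Ioc 0 (j*m) = Finset.Icc 1 (j*m) from (Finset.Icc_add_one_left_eq_Ioc 0 _).symm]
    exact sum_icc_le_sum_subset x hx A (j*m) hAcard hA1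
  have htot : ∑ i ∈ Finset.range k, T i = ∑ i ∈ Finset.range k, S' i := by
    have hr : ∑ i ∈ Finset.range k, S' i = ∑ b : Fin k, S b := by
      rw [← Fin.sum_univ_eq_sum_range S' k, ← Equiv.sum_comp σ S]
      apply Finset.sum_congr rfl
      intro i _
      simp only [hS'def, dif_pos i.isLt]
    rw [hr, hTpre k, ← hn,
      show Finset.Ioc 0 n = Finset.Icc 1 n from (Finset.Icc_add_one_left_eq_Ioc 0 n).symm, ← hcover]
    exact Finset.sum_biUnion (fun a _ b _ hab => hdisj a b hab)
  have hkey := abel_sq k T S' (fun i h => hTmono i) hS'mono hpre htot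
  have hSq : ∑ ℓ : Fin k, S ℓ ^ 2 = ∑ i ∈ Finset.range k, S' i ^ 2 := by
    rw [← Fin.sum_univ_eq_sum_range (fun i => S' i ^ 2) k,
      ← Equiv.sum_comp σ (fun b => S b ^ 2)]
    apply Finset.sum_congr rfl
    intro i _
    simp only [hS'def, dif_pos i.isLt]
  have hOP : ∀ ℓ : Fin k, ∑ i ∈ orderedPartition m k ℓ, x i = T (ℓ : ℕ) := by
    intro ℓ
    show ∑ i ∈ Finset.Icc ((ℓ:ℕ)*m+1) (((ℓ:ℕ)+1)*m), x i = _
    rw [show (ℓ:ℕ)*m+1 = ((ℓ:ℕ)*m).succ from rfl]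
    exact congrArg (fun s => ∑ i ∈ s, x i) (Finset.Icc_add_one_left_eq_Ioc ((ℓ:ℕ)*m) _)
  have e1 : ∑ ℓ : Fin k, ((1 / (m : ℝ)) * ∑ i ∈ Q ℓ, x i) ^ 2
      = (1 / (m : ℝ))^2 * ∑ i ∈ Finset.range k, S' i ^ 2 := by
    rw [← hSq, Finset.mul_sum]
    apply Finset.sum_congr rfl
    intro ℓ _
    show ((1 / (m : ℝ)) * S ℓ) ^ 2 = _
    ring
  have e2 : ∑ ℓ : Fin k, ((1 / (m : ℝ)) * ∑ i ∈ orderedPartition m k ℓ, x i) ^ 2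
      = (1 / (m : ℝ))^2 * ∑ i ∈ Finset.range k, T i ^ 2 := by
    rw [← Fin.sum_univ_eq_sum_range (fun i => T i ^ 2) k, Finset.mul_sum]
    apply Finset.sum_congr rfl
    intro ℓ _
    rw [hOP ℓ]
    ring
  rw [e1, e2]
  exact mul_le_mul_of_nonneg_left hkey (by positivity)
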